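/- The surrounding condition is open: if a continuous loop γ₀ surrounds a point v₀, then every continuous loop γ sufficiently uniformly close to γ₀ surrounds every point v sufficiently close to v₀. -/

import Mathlib

/-- `f` surrounds `v`: there is an affine basis of `F` contained in the image of `f`
with respect to which `v` has strictly positive barycentric coordinates. -/
def LoopSurrounds {F : Type*} [NormedAddCommGroup F] [NormedSpace ℝ F]
    (f : ℝ → F) (v : F) : Prop :=
  ∃ (p : Fin (Module.finrank ℝ F + 1) → F) (w : Fin (Module.finrank ℝ F + 1) → ℝ),
    (∀ i, p i ∈ Set.range f) ∧ AffineIndependent ℝ p ∧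
      affineSpan ℝ (Set.range p) = ⊤ ∧ (∀ i, 0 < w i) ∧
      ∑ i, w i = 1 ∧ ∑ i, w i • p i = v

open Matrix Set
set_option maxHeartbeats 2000000 in

/-- The surrounding condition is open: if a continuous loop `γ₀` surrounds `v₀`, then
every continuous loop uniformly close to `γ₀` surrounds every point close to `v₀`. -/
theorem surrounds_open {F : Type*} [NormedAddCommGroup F] [NormedSpace ℝ F]
    [FiniteDimensional ℝ F] {γ₀ : ℝ → F} {v₀ : F}
    (hγ₀ : Continuous γ₀) (hper₀ : Function.Periodic γ₀ 1)
    (h : LoopSurrounds γ₀ v₀) :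
    ∃ ε > 0, ∀ γ : ℝ → F, Continuous γ → Function.Periodic γ 1 →
      (∀ s, ‖γ s - γ₀ s‖ < ε) → ∀ v : F, ‖v - v₀‖ < ε → LoopSurrounds γ v := by
  obtain ⟨p, w, hmem, hind, hspan, hwpos, hwsum, hwcomb⟩ := h
  choose t ht using hmem
  let B : AffineBasis (Fin (Module.finrank ℝ F + 1)) ℝ F := ⟨p, hind, hspan⟩
  have hBcoe : (B : Fin (Module.finrank ℝ F + 1) → F) = p := rfl
  -- the matrix of a candidate tuple with respect to the basis `B`
  set M : ((Fin (Module.finrank ℝ F + 1) → F) × F) → Matrix (Fin (Module.finrank ℝ F + 1)) (Fin (Module.finrank ℝ F + 1)) ℝ :=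
    fun x => B.toMatrix x.1 with hM
  have hMcont : Continuous M := by
    apply continuous_matrix
    intro i j
    exact (continuous_barycentric_coord B j).comp
      ((continuous_apply i).comp continuous_fst)
  -- candidate barycentric coordinates
  set c : ((Fin (Module.finrank ℝ F + 1) → F) × F) → Fin (Module.finrank ℝ F + 1) → ℝ :=
    fun x => B.coords x.2 ᵥ* (M x)⁻¹ with hc
  have hcoordscont : Continuous fun x : ((Fin (Module.finrank ℝ F + 1) → F) × F) => B.coords x.2 :=
    (B.coords.continuous_of_finiteDimensional).comp continuous_snd
  set U : Set ((Fin (Module.finrank ℝ F + 1) → F) × F) := {x | (M x).det ≠ 0} with hU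
  have hUopen : IsOpen U :=
    isOpen_compl_iff.mpr (isClosed_singleton.preimage hMcont.matrix_det)
  have hccont : ContinuousOn c U := by
    intro x hx
    apply ContinuousAt.continuousWithinAt
    have hinv : ContinuousAt (fun y => (M y)⁻¹) x := by
      refine ContinuousAt.comp ?_ hMcont.continuousAt
      refine continuousAt_matrix_inv _ ?_
      rw [Ring.inverse_eq_inv']
      exact continuousAt_inv₀ hx
    have hcont2 : Continuous fun z : (Fin (Module.finrank ℝ F + 1) → ℝ) × Matrix (Fin (Module.finrank ℝ F + 1)) (Fin (Module.finrank ℝ F + 1)) ℝ =>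
        z.1 ᵥ* z.2 :=
      Continuous.matrix_vecMul continuous_fst continuous_snd
    exact hcont2.continuousAt.comp (hcoordscont.continuousAt.prodMk hinv)
  set S : Set ((Fin (Module.finrank ℝ F + 1) → F) × F) :=
    U ∩ c ⁻¹' {y | ∀ i, 0 < y i} with hS
  have hopen : IsOpen S := by
    refine hccont.isOpen_inter_preimage hUopen ?_
    have : {y : Fin (Module.finrank ℝ F + 1) → ℝ | ∀ i, 0 < y i} = ⋂ i, (fun y => y i) ⁻¹' Ioi 0 := by
      ext y; simp [mem_iInter]
    rw [this]
    exact isOpen_iInter_of_finite fun i => (continuous_apply i).isOpen_preimage _ isOpen_Ioi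
  -- the base point lies in `S`
  have hMp : M (p, v₀) = 1 := by
    show B.toMatrix p = 1
    conv_lhs => rw [← hBcoe]
    exact B.toMatrix_self
  have hcoordsv₀ : B.coords v₀ = w := by
    funext i
    have hcomb : Finset.univ.affineCombination ℝ p w = v₀ := by
      rw [Finset.univ.affineCombination_eq_linear_combination p w hwsum]
      exact hwcomb
    have := B.coord_apply_combination_of_mem (Finset.mem_univ i) hwsum
    rw [B.coords_apply, ← hcomb]
    exact this
  have hbase : (p, v₀) ∈ S := by
    constructor
    · show (M (p, v₀)).det ≠ 0
      rw [hMp, Matrix.det_one]; exact one_ne_zero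
    · show ∀ i, 0 < c (p, v₀) i
      intro i
      have : c (p, v₀) = w := by
        rw [hc]; simp only [hMp, inv_one, Matrix.vecMul_one, hcoordsv₀]
      rw [this]; exact hwpos i
  obtain ⟨ε, hε, hball⟩ := Metric.isOpen_iff.mp hopen _ hbase
  refine ⟨ε, hε, fun γ hγ hper hclose v hv => ?_⟩
  set q : Fin (Module.finrank ℝ F + 1) → F := fun i => γ (t i) with hq
  have hmemS : (q, v) ∈ S := by
    apply hball
    rw [Metric.mem_ball, Prod.dist_eq]
    apply max_lt
    · rw [dist_pi_lt_iff hε]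
      intro i
      show dist (γ (t i)) (p i) < ε
      rw [dist_eq_norm, ← ht i]
      exact hclose (t i)
    · rw [dist_eq_norm]; exact hv
  obtain ⟨hdet, hpos⟩ := hmemS
  have hunit : IsUnit (B.toMatrix q) := by
    rw [Matrix.isUnit_iff_isUnit_det, isUnit_iff_ne_zero]
    exact hdet
  obtain ⟨hind', hspan'⟩ := (B.isUnit_toMatrix_iff q).mp hunit
  let B' : AffineBasis (Fin (Module.finrank ℝ F + 1)) ℝ F := ⟨q, hind', hspan'⟩
  have hB'coe : (B' : Fin (Module.finrank ℝ F + 1) → F) = q := rfl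
  have hcq : c (q, v) = B'.coords v := by
    show B.coords v ᵥ* (B.toMatrix q)⁻¹ = B'.coords v
    have : B.toMatrix q = B.toMatrix (B' : Fin (Module.finrank ℝ F + 1) → F) := by rw [hB'coe]
    rw [this]
    exact B.toMatrix_inv_vecMul_toMatrix B' v
  refine ⟨q, B'.coords v, fun i => ⟨t i, rfl⟩, hind', hspan', ?_, ?_, ?_⟩
  · intro i
    have := hpos i
    rwa [hcq] at this
  · exact B'.sum_coord_apply_eq_one v
  · have := B'.linear_combination_coord_eq_self v
    simpa [hB'coe, AffineBasis.coords_apply] using this
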